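/- Let G be a compact Hausdorff abelian topological group. A continuous character of G (i.e., an element of the Pontryagin dual of G) has finite order in the Pontryagin dual group if and only if it vanishes on the connected component of the identity of G. Consequently, the torsion subgroup of the Pontryagin dual of G is exactly the image of the injective homomorphism from the Pontryagin dual of the component group G/G₀ to the Pontryagin dual of G given by precomposition with the quotient map G → G/G₀. -/

import Mathlib

open Set

/-- No small subgroups in the circle: an element all of whose multiples are within `1/4`
of zero is zero. -/
lemma aux_no_small_subgroups (y : AddCircle (1 : ℝ))
    (h : ∀ k : ℕ, ‖(k • y : AddCircle (1 : ℝ))‖ < 4⁻¹) : y = 0 := by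
  obtain ⟨x, rfl⟩ := QuotientAddGroup.mk_surjective y
  set r : ℝ := x - round x with hr
  have hmk : ((r : ℝ) : AddCircle (1 : ℝ)) = (x : AddCircle (1 : ℝ)) := by
    rw [QuotientAddGroup.eq]
    refine ⟨round x, ?_⟩
    simp [hr]
  have hnorm : ‖((x : ℝ) : AddCircle (1 : ℝ))‖ = |r| := by
    rw [AddCircle.norm_eq]; simp [hr]
  by_cases hr0 : r = 0
  · rw [← hmk, hr0]; simp
  · exfalso
    set a : ℝ := |r| with ha
    have ha0 : 0 < a := abs_pos.mpr hr0
    have ha14 : a < 4⁻¹ := by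
      have := h 1
      rwa [one_smul, hnorm] at this
    set k : ℕ := ⌈(4 * a)⁻¹⌉₊ with hk
    have hk1 : (4 * a)⁻¹ ≤ (k : ℝ) := Nat.le_ceil _
    have hk2 : (k : ℝ) < (4 * a)⁻¹ + 1 :=
      Nat.ceil_lt_add_one (by positivity)
    have hka_lb : 4⁻¹ ≤ (k : ℝ) * a := by
      rw [inv_le_iff_one_le_mul₀ (by positivity)] at hk1
      calc (4:ℝ)⁻¹ = 4⁻¹ * 1 := by ring
        _ ≤ 4⁻¹ * ((k : ℝ) * (4 * a)) := by
            apply mul_le_mul_of_nonneg_left _ (by norm_num)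
            nlinarith
        _ = (k : ℝ) * a := by ring
    have hka_ub : (k : ℝ) * a < 2⁻¹ := by
      have : (k : ℝ) * a < ((4 * a)⁻¹ + 1) * a := by
        apply mul_lt_mul_of_pos_right hk2 ha0
      have h4 : ((4 * a)⁻¹ + 1) * a = 4⁻¹ + a := by
        field_simp
      rw [h4] at this
      linarith
    have hcast : ((k • r : ℝ) : AddCircle (1 : ℝ)) = k • ((r : ℝ) : AddCircle (1 : ℝ)) :=
      map_nsmul (QuotientAddGroup.mk' (AddSubgroup.zmultiples (1 : ℝ))) k r
    have hmul : ((k : ℕ) • ((x : ℝ) : AddCircle (1 : ℝ))) = (((k : ℝ) * r : ℝ) : AddCircle (1 : ℝ)) := by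
      rw [← hmk, ← hcast, nsmul_eq_mul]
    have habs : |(k : ℝ) * r| = (k : ℝ) * a := by
      rw [abs_mul, ha, Nat.abs_cast]
    have hnorm2 : ‖((((k : ℝ) * r : ℝ)) : AddCircle (1 : ℝ))‖ = |(k : ℝ) * r| := by
      rw [AddCircle.norm_coe_eq_abs_iff (1 : ℝ) one_ne_zero]
      rw [habs]
      simp only [abs_one]
      linarith
    have := h k
    rw [hmul, hnorm2, habs] at this
    linarith

/-- In a compact Hausdorff space, any open set containing a connected component contains
a clopen set around the base point. -/
lemma aux_clopen_sandwich {X : Type*} [TopologicalSpace X] [T2Space X] [CompactSpace X]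
    (x : X) {V : Set X} (hV : IsOpen V) (h : connectedComponent x ⊆ V) :
    ∃ W : Set X, IsClopen W ∧ x ∈ W ∧ W ⊆ V := by
  let N := { s : Set X // IsClopen s ∧ x ∈ s }
  haveI : Nonempty N := ⟨⟨univ, isClopen_univ, mem_univ x⟩⟩
  have hdir : Directed (fun a b : Set X => a ⊇ b) fun s : N => s.val := by
    rintro ⟨s, hs, hxs⟩ ⟨t, ht, hxt⟩
    exact ⟨⟨s ∩ t, hs.inter ht, ⟨hxs, hxt⟩⟩, inter_subset_left, inter_subset_right⟩
  have hNcl : ∀ s : N, IsClosed s.val := fun s => s.property.1.1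
  have h_nhd : ∀ y ∈ ⋂ s : N, s.val, V ∈ nhds y := by
    intro y hy
    have : y ∈ connectedComponent x := by
      rw [connectedComponent_eq_iInter_isClopen]; exact hy
    exact hV.mem_nhds (h this)
  obtain ⟨⟨s, hs, hxs⟩, hsV⟩ := exists_subset_nhds_of_compactSpace hdir hNcl h_nhd
  exact ⟨s, hs, hxs, hsV⟩

lemma aux_smul_apply {G : Type*} [AddCommGroup G] [TopologicalSpace G]
    (n : ℕ) (χ : ContinuousAddMonoidHom G (AddCircle (1 : ℝ))) (g : G) :
    (n • χ) g = n • χ g := by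
  induction n with
  | zero => rw [zero_nsmul, zero_nsmul]; rfl
  | succ m ih => rw [succ_nsmul, succ_nsmul, ← ih]; rfl

theorem torsion_character_iff_vanishes_on_identity_component
    {G : Type*} [AddCommGroup G] [TopologicalSpace G] [IsTopologicalAddGroup G]
    [CompactSpace G] [T2Space G] :
    (∀ χ : ContinuousAddMonoidHom G (AddCircle (1 : ℝ)),
        (∃ n : ℕ, 0 < n ∧ n • χ = 0) ↔ ∀ x ∈ connectedComponent (0 : G), χ x = 0) ∧
    (∀ ψ₁ ψ₂ : ContinuousAddMonoidHom
          (G ⧸ AddSubgroup.connectedComponentOfZero G) (AddCircle (1 : ℝ)),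
        (∀ x : G, ψ₁ (QuotientAddGroup.mk x) = ψ₂ (QuotientAddGroup.mk x)) → ψ₁ = ψ₂) ∧
    (∀ χ : ContinuousAddMonoidHom G (AddCircle (1 : ℝ)),
        (∃ n : ℕ, 0 < n ∧ n • χ = 0) ↔
          ∃ ψ : ContinuousAddMonoidHom
              (G ⧸ AddSubgroup.connectedComponentOfZero G) (AddCircle (1 : ℝ)),
            ∀ x : G, χ x = ψ (QuotientAddGroup.mk x)) := by
  have main : ∀ χ : ContinuousAddMonoidHom G (AddCircle (1 : ℝ)),
      (∃ n : ℕ, 0 < n ∧ n • χ = 0) ↔ ∀ x ∈ connectedComponent (0 : G), χ x = 0 := by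
    intro χ
    constructor
    · rintro ⟨n, hn, hχ⟩ x hx
      -- the image of the connected component is a finite preconnected set
      set T : Set (AddCircle (1 : ℝ)) := χ '' connectedComponent (0 : G) with hT
      have hTpre : IsPreconnected T :=
        isPreconnected_connectedComponent.image χ χ.continuous.continuousOn
      have h0T : (0 : AddCircle (1 : ℝ)) ∈ T :=
        ⟨0, mem_connectedComponent, map_zero χ⟩
      have hxT : χ x ∈ T := ⟨x, hx, rfl⟩
      have hTS : T ⊆ {u : AddCircle (1 : ℝ) | n • u = 0} := by
        rintro _ ⟨g, _, rfl⟩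
        have h0 : (n • χ) g = 0 := by rw [hχ]; rfl
        rw [mem_setOf_eq, ← aux_smul_apply n χ g, h0]
      have hSfin : {u : AddCircle (1 : ℝ) | n • u = 0}.Finite := by
        have hsub : {u : AddCircle (1 : ℝ) | n • u = 0} ⊆
            ⋃ d ∈ Finset.Icc 1 n, {u : AddCircle (1 : ℝ) | addOrderOf u = d} := by
          intro u hu
          have hfin : IsOfFinAddOrder u := by
            rw [isOfFinAddOrder_iff_nsmul_eq_zero]
            exact ⟨n, hn, hu⟩
          have hdvd : addOrderOf u ∣ n := addOrderOf_dvd_of_nsmul_eq_zero hu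
          have hpos : 0 < addOrderOf u := hfin.addOrderOf_pos
          simp only [mem_iUnion, mem_setOf_eq]
          exact ⟨addOrderOf u, Finset.mem_Icc.mpr ⟨hpos, Nat.le_of_dvd hn hdvd⟩, rfl⟩
        refine Set.Finite.subset ?_ hsub
        apply Set.Finite.biUnion (Finset.Icc 1 n).finite_toSet
        intro d hd
        exact AddCircle.finite_setOfPred_addOrderOf_eq (p := (1 : ℝ))
          (Nat.lt_of_lt_of_le Nat.zero_lt_one (Finset.mem_Icc.mp hd).1)
      have hTfin : T.Finite := hSfin.subset hTS
      -- a finite preconnected set containing 0 is {0}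
      by_contra hne
      have hclosed : IsClosed (T \ {0}) := (hTfin.subset diff_subset).isClosed
      have := hTpre (T \ {0})ᶜ ({(0 : AddCircle (1 : ℝ))}ᶜ)
        hclosed.isOpen_compl isOpen_compl_singleton
        (by
          intro t ht
          by_cases h0 : t = 0
          · left; simp [h0]
          · right; simpa using h0)
        ⟨0, h0T, by simp⟩
        ⟨χ x, hxT, by simpa using hne⟩
      obtain ⟨t, htT, htu, htv⟩ := this
      simp only [mem_compl_iff, mem_diff, mem_singleton_iff, not_and, not_not] at htu htv
      exact htv (htu htT)
    · intro hvan
      -- χ vanishes on the component; find a small clopen set, then an open subgroup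
      set V : Set G := χ ⁻¹' {z : AddCircle (1 : ℝ) | ‖z‖ < 4⁻¹} with hV
      have hVopen : IsOpen V := by
        apply χ.continuous.isOpen_preimage
        have : {z : AddCircle (1 : ℝ) | ‖z‖ < 4⁻¹} = Metric.ball 0 4⁻¹ := by
          ext z; simp [Metric.mem_ball, dist_zero_right]
        rw [this]; exact Metric.isOpen_ball
      have hCV : connectedComponent (0 : G) ⊆ V := by
        intro g hg
        have : χ g = 0 := hvan g hg
        simp [hV, this]
      obtain ⟨W, hWclopen, h0W, hWV⟩ := aux_clopen_sandwich (0 : G) hVopen hCV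
      obtain ⟨H, hHW⟩ :=
        IsTopologicalAddGroup.exist_openAddSubgroup_sub_clopen_nhds_of_zero hWclopen h0W
      haveI : Finite (G ⧸ H.toAddSubgroup) :=
        AddSubgroup.quotient_finite_of_isOpen H.toAddSubgroup H.isOpen
      haveI : AddSubgroup.FiniteIndex H.toAddSubgroup :=
        AddSubgroup.finiteIndex_of_finite_quotient (H := H.toAddSubgroup)
      set n : ℕ := H.toAddSubgroup.index with hn
      have hnpos : 0 < n :=
        Nat.pos_of_ne_zero AddSubgroup.FiniteIndex.index_ne_zero
      refine ⟨n, hnpos, ?_⟩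
      ext g
      have hmem : ∀ k : ℕ, k • (n • g) ∈ H.toAddSubgroup := fun k =>
        AddSubgroup.nsmul_mem _ (AddSubgroup.nsmul_index_mem H.toAddSubgroup g) k
      have hsmall : ∀ k : ℕ, ‖(k • (χ (n • g)) : AddCircle (1 : ℝ))‖ < 4⁻¹ := by
        intro k
        have h1 : χ (k • (n • g)) = k • χ (n • g) := map_nsmul χ _ _
        have h2 : k • (n • g) ∈ V := hWV (hHW (hmem k))
        rw [hV, mem_preimage, mem_setOf_eq] at h2
        rwa [h1] at h2
      have hzero : χ (n • g) = 0 := aux_no_small_subgroups _ hsmall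
      rw [aux_smul_apply, ← map_nsmul χ, hzero]
      rfl
  have hker : ∀ x : G, x ∈ AddSubgroup.connectedComponentOfZero G ↔
      x ∈ connectedComponent (0 : G) := fun x => Iff.rfl
  refine ⟨main, ?_, ?_⟩
  · intro ψ₁ ψ₂ h
    ext q
    obtain ⟨x, rfl⟩ := QuotientAddGroup.mk_surjective q
    exact h x
  · intro χ
    rw [main χ]
    constructor
    · intro hvan
      have hle : AddSubgroup.connectedComponentOfZero G ≤ χ.toAddMonoidHom.ker := by
        intro x hxmem
        exact hvan x ((hker x).mp hxmem)
      set f : (G ⧸ AddSubgroup.connectedComponentOfZero G) →+ AddCircle (1 : ℝ) :=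
        QuotientAddGroup.lift _ χ.toAddMonoidHom hle with hf
      have hcomp : ∀ x : G, f (QuotientAddGroup.mk x) = χ x := fun x => rfl
      have hfc : Continuous f := by
        rw [(QuotientAddGroup.isQuotientMap_mk
          (AddSubgroup.connectedComponentOfZero G)).continuous_iff]
        exact χ.continuous
      exact ⟨⟨f, hfc⟩, fun x => (hcomp x).symm⟩
    · rintro ⟨ψ, hψ⟩ x hx
      have : (QuotientAddGroup.mk x : G ⧸ AddSubgroup.connectedComponentOfZero G) = 0 :=
        (QuotientAddGroup.eq_zero_iff x).mpr ((hker x).mpr hx)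
      rw [hψ x, this, map_zero]
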